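/- Let U ⊆ ℝ^2 be symmetric with respect to the x-axis, described by a finite set S of polynomials of the form g_i(x, y^2), and suppose every polynomial nonnegative on U lies in the quadratic module M_S ⊂ ℝ[x,y]. Let S' = {g_i(x,y)} ∪ {y} and U^+ = K_{S'}. Then every polynomial nonnegative on U^+ lies in the preordering T_{S'}, and in fact in the set {σ_0 + Σ_i σ_i g_i(x,y) + τ_0 y + Σ_i τ_i y g_i(x,y) : σ_i, τ_i sums of squares}. -/

import Mathlib

open MvPolynomial

/-- A sum of squares of polynomials. -/
def IsSOS {σ : Type*} (p : MvPolynomial σ ℝ) : Prop :=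
  ∃ (k : ℕ) (q : Fin k → MvPolynomial σ ℝ), p = ∑ i, (q i) ^ 2

/-- Substitution `y ↦ y²` in a polynomial of `ℝ[x,y]` (with `x = X 0`, `y = X 1`). -/
noncomputable def subY2 (p : MvPolynomial (Fin 2) ℝ) : MvPolynomial (Fin 2) ℝ :=
  MvPolynomial.aeval ![X 0, (X 1) ^ 2] p

lemma subY2_add (p q : MvPolynomial (Fin 2) ℝ) : subY2 (p + q) = subY2 p + subY2 q :=
  map_add (MvPolynomial.aeval ![X 0, (X 1) ^ 2]) p q

lemma subY2_sub (p q : MvPolynomial (Fin 2) ℝ) : subY2 (p - q) = subY2 p - subY2 q :=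
  map_sub (MvPolynomial.aeval ![X 0, (X 1) ^ 2]) p q

lemma subY2_neg (p : MvPolynomial (Fin 2) ℝ) : subY2 (-p) = -subY2 p :=
  map_neg (MvPolynomial.aeval ![X 0, (X 1) ^ 2]) p

lemma eval_subY2 (x : Fin 2 → ℝ) (p : MvPolynomial (Fin 2) ℝ) :
    eval x (subY2 p) = eval ![x 0, (x 1)^2] p := by
  rw [subY2, ← coe_aeval_eq_eval, ← coe_aeval_eq_eval]
  show (MvPolynomial.aeval x : MvPolynomial (Fin 2) ℝ →ₐ[ℝ] ℝ) (MvPolynomial.aeval ![X 0, (X 1) ^ 2] p) = _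
  have h : (fun i => (MvPolynomial.aeval x : MvPolynomial (Fin 2) ℝ →ₐ[ℝ] ℝ) (![X 0, (X 1)^2] i)) = ![x 0, (x 1)^2] := by
    funext i; fin_cases i <;> simp
  rw [comp_aeval_apply, h]; rfl

lemma decompY (p : MvPolynomial (Fin 2) ℝ) :
    ∃ a b, p = subY2 a + X 1 * subY2 b := by
  induction p using MvPolynomial.induction_on with
  | C c => exact ⟨C c, 0, by simp [subY2]⟩
  | add p q hp hq =>
    obtain ⟨a, b, rfl⟩ := hp; obtain ⟨a', b', rfl⟩ := hq
    exact ⟨a + a', b + b', by simp [subY2, map_add]; ring⟩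
  | mul_X p i hp =>
    obtain ⟨a, b, rfl⟩ := hp
    fin_cases i
    · exact ⟨a * X 0, b * X 0, by simp [subY2, map_mul]; ring⟩
    · exact ⟨b * X 1, a, by simp [subY2, map_mul]; ring⟩

lemma zero_of_pos (q : MvPolynomial (Fin 2) ℝ)
    (h : ∀ x t : ℝ, 0 < t → eval ![x, t] q = 0) : q = 0 := by
  apply MvPolynomial.funext
  intro y
  set P : Polynomial ℝ := MvPolynomial.aeval ![Polynomial.C (y 0), Polynomial.X] q with hPdef
  have hP : ∀ t : ℝ, P.eval t = eval ![y 0, t] q := by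
    intro t
    have h1 : P.eval t = (Polynomial.aeval t : Polynomial ℝ →ₐ[ℝ] ℝ)
        (MvPolynomial.aeval ![Polynomial.C (y 0), Polynomial.X] q) := by
      rw [Polynomial.coe_aeval_eq_eval]
    rw [h1, comp_aeval_apply]
    have h2 : (fun i => (Polynomial.aeval t : Polynomial ℝ →ₐ[ℝ] ℝ)
        (![Polynomial.C (y 0), Polynomial.X] i)) = ![y 0, t] := by
      funext i; fin_cases i <;> simp
    rw [h2, ← coe_aeval_eq_eval]; rfl
  have hP0 : P = 0 := by
    apply Polynomial.eq_zero_of_infinite_isRoot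
    apply Set.Infinite.mono (s := Set.Ioi (0:ℝ))
    · intro t ht; exact (hP t).trans (h (y 0) t ht)
    · exact Set.Ioi_infinite 0
  have hy : y = ![y 0, y 1] := by funext i; fin_cases i <;> rfl
  rw [map_zero, hy, ← hP (y 1), hP0, Polynomial.eval_zero]

lemma uniqY (u v : MvPolynomial (Fin 2) ℝ)
    (h : subY2 u + X 1 * subY2 v = 0) : u = 0 ∧ v = 0 := by
  have hpt : ∀ x t : ℝ, eval ![x, t^2] u + t * eval ![x, t^2] v = 0 := by
    intro x t
    have := congrArg (eval ![x, t]) h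
    simpa [eval_subY2] using this
  have hu : ∀ x s : ℝ, 0 < s → eval ![x, s] u = 0 := by
    intro x s hs
    have h1 := hpt x (Real.sqrt s)
    have h2 := hpt x (-(Real.sqrt s))
    rw [Real.sq_sqrt hs.le] at h1
    rw [neg_sq, Real.sq_sqrt hs.le] at h2
    nlinarith [h1, h2]
  have hv : ∀ x s : ℝ, 0 < s → eval ![x, s] v = 0 := by
    intro x s hs
    have h1 := hpt x (Real.sqrt s)
    have h2 := hpt x (-(Real.sqrt s))
    rw [Real.sq_sqrt hs.le] at h1
    rw [neg_sq, Real.sq_sqrt hs.le] at h2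
    have hsq : (0:ℝ) < Real.sqrt s := Real.sqrt_pos.mpr hs
    nlinarith [h1, h2]
  exact ⟨zero_of_pos u hu, zero_of_pos v hv⟩

lemma sos_decomp (p : MvPolynomial (Fin 2) ℝ) (hp : IsSOS p) :
    ∃ A B O, IsSOS A ∧ IsSOS B ∧ p = subY2 (A + X 1 * B) + X 1 * subY2 O := by
  obtain ⟨k, q, rfl⟩ := hp
  choose a b hab using fun j => decompY (q j)
  refine ⟨∑ j, a j ^ 2, ∑ j, b j ^ 2, ∑ j, 2 * a j * b j, ⟨k, a, rfl⟩, ⟨k, b, rfl⟩, ?_⟩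
  have key : ∀ j, (q j)^2 = subY2 ((a j)^2) + X 1 ^ 2 * subY2 ((b j)^2)
      + X 1 * subY2 (2 * a j * b j) := by
    intro j
    rw [hab j]
    simp only [subY2, map_mul, map_add, map_pow, map_ofNat]
    ring
  calc ∑ j, (q j) ^ 2
      = ∑ j, (subY2 ((a j)^2) + X 1 ^ 2 * subY2 ((b j)^2) + X 1 * subY2 (2 * a j * b j)) :=
        Finset.sum_congr rfl fun j _ => key j
    _ = subY2 ((∑ j, a j ^ 2) + X 1 * (∑ j, b j ^ 2)) + X 1 * subY2 (∑ j, 2 * a j * b j) := by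
        simp only [subY2, map_add, map_mul, map_sum, aeval_X, Matrix.cons_val_one,
          Matrix.head_cons, Matrix.cons_val_zero]
        rw [Finset.sum_add_distrib, Finset.sum_add_distrib, ← Finset.mul_sum, ← Finset.mul_sum]

theorem elimination_of_squares (s : ℕ) (g : Fin s → MvPolynomial (Fin 2) ℝ)
    (H : ∀ f : MvPolynomial (Fin 2) ℝ,
      (∀ x : Fin 2 → ℝ, (∀ i, 0 ≤ eval x (subY2 (g i))) → 0 ≤ eval x f) →
      ∃ (σ₀ : MvPolynomial (Fin 2) ℝ) (τ : Fin s → MvPolynomial (Fin 2) ℝ),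
        IsSOS σ₀ ∧ (∀ i, IsSOS (τ i)) ∧ f = σ₀ + ∑ i, τ i * subY2 (g i)) :
    ∀ f : MvPolynomial (Fin 2) ℝ,
      (∀ x : Fin 2 → ℝ, (∀ i, 0 ≤ eval x (g i)) → 0 ≤ x 1 → 0 ≤ eval x f) →
      ∃ (σ₀ τ₀ : MvPolynomial (Fin 2) ℝ) (σ τ : Fin s → MvPolynomial (Fin 2) ℝ),
        IsSOS σ₀ ∧ IsSOS τ₀ ∧ (∀ i, IsSOS (σ i)) ∧ (∀ i, IsSOS (τ i)) ∧
        f = σ₀ + (∑ i, σ i * g i) + τ₀ * X 1 + ∑ i, τ i * X 1 * g i := by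
  intro f hf
  have hnn : ∀ x : Fin 2 → ℝ, (∀ i, 0 ≤ eval x (subY2 (g i))) → 0 ≤ eval x (subY2 f) := by
    intro x hx
    rw [eval_subY2]
    refine hf ![x 0, (x 1)^2] (fun i => ?_) (by simp [sq_nonneg])
    have := hx i
    rwa [eval_subY2] at this
  obtain ⟨σ₀, τ, hσ₀, hτ, heq⟩ := H (subY2 f) hnn
  obtain ⟨A0, B0, O0, hA0, hB0, h0⟩ := sos_decomp σ₀ hσ₀
  choose A B O hA hB hABO using fun i => sos_decomp (τ i) (hτ i)
  have hsum : ∑ i, τ i * subY2 (g i)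
      = subY2 (∑ i, (A i + X 1 * B i) * g i) + X 1 * subY2 (∑ i, O i * g i) := by
    simp only [subY2, map_sum, map_add, map_mul, aeval_X, Matrix.cons_val_one, Matrix.head_cons]
    rw [Finset.mul_sum, ← Finset.sum_add_distrib]
    refine Finset.sum_congr rfl fun i _ => ?_
    have := hABO i
    simp only [subY2, map_add, map_mul, aeval_X, Matrix.cons_val_one, Matrix.head_cons] at this
    rw [this]; ring
  set E : MvPolynomial (Fin 2) ℝ := A0 + X 1 * B0 + ∑ i, (A i + X 1 * B i) * g i with hE
  set Od : MvPolynomial (Fin 2) ℝ := O0 + ∑ i, O i * g i with hOd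
  have hfE : subY2 f = subY2 E + X 1 * subY2 Od := by
    have e1 : subY2 E = subY2 (A0 + X 1 * B0) + subY2 (∑ i, (A i + X 1 * B i) * g i) := by
      rw [hE, subY2_add]
    have e2 : subY2 Od = subY2 O0 + subY2 (∑ i, O i * g i) := by
      rw [hOd, subY2_add]
    rw [heq, h0, hsum, e1, e2]; ring
  have hz : subY2 (f - E) + X 1 * subY2 (-Od) = 0 := by
    rw [subY2_sub, subY2_neg, hfE]; ring
  obtain ⟨hfe, -⟩ := uniqY (f - E) (-Od) hz
  have hfeq : f = E := by linear_combination hfe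
  refine ⟨A0, B0, A, B, hA0, hB0, hA, hB, ?_⟩
  rw [hfeq, hE]
  rw [show ∑ i, (A i + X 1 * B i) * g i = (∑ i, A i * g i) + ∑ i, B i * X 1 * g i by
    rw [← Finset.sum_add_distrib]; exact Finset.sum_congr rfl fun i _ => by ring]
  ring
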